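/- Attractor eigenvectors evolve unitarily under each Kraus operator: if |λ| = 1 and X is a d×d complex matrix with Φ(X) = λ·X, then for every index j = 1, …, m one has U_j · X · U_j† = λ·X = Φ(X). -/

import Mathlib

open Matrix BigOperators

noncomputable def toE {d : ℕ} : Matrix (Fin d) (Fin d) ℂ →ₗ[ℂ] EuclideanSpace ℂ (Fin d × Fin d) where
  toFun A := WithLp.toLp 2 (fun q => A q.1 q.2)
  map_add' A B := rfl
  map_smul' c A := rfl

lemma inner_toE {d : ℕ} (A B : Matrix (Fin d) (Fin d) ℂ) :
    inner ℂ (toE A) (toE B) = Matrix.trace (Aᴴ * B) := by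
  simp [toE, PiLp.inner_apply, Matrix.trace, Matrix.diag, Matrix.mul_apply,
    Matrix.conjTranspose_apply, ← Finset.sum_product', Finset.univ_product_univ, mul_comm]
  exact Fintype.sum_equiv (Equiv.prodComm _ _) _ _ (fun x => rfl)

lemma trace_conj_unitary {d : ℕ} (V : Matrix (Fin d) (Fin d) ℂ)
    (hV : V ∈ Matrix.unitaryGroup (Fin d) ℂ)
    (A B : Matrix (Fin d) (Fin d) ℂ) :
    Matrix.trace ((V * A * Vᴴ)ᴴ * (V * B * Vᴴ)) = Matrix.trace (Aᴴ * B) := by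
  have h1 : Vᴴ * V = 1 := by
    simpa [Matrix.star_eq_conjTranspose] using hV.1
  have : (V * A * Vᴴ)ᴴ * (V * B * Vᴴ) = V * (Aᴴ * B) * Vᴴ := by
    simp only [Matrix.conjTranspose_mul, Matrix.conjTranspose_conjTranspose]
    calc V * (Aᴴ * Vᴴ) * (V * B * Vᴴ) = V * Aᴴ * (Vᴴ * V) * (B * Vᴴ) := by
          simp only [Matrix.mul_assoc]
      _ = V * (Aᴴ * B) * Vᴴ := by rw [h1, Matrix.mul_one]; simp only [Matrix.mul_assoc]
  rw [this, Matrix.trace_mul_cycle, ← Matrix.mul_assoc, h1, Matrix.one_mul]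

theorem stmt_12 {d m : ℕ} (hd : 1 ≤ d)
    (U : Fin m → Matrix (Fin d) (Fin d) ℂ)
    (hU : ∀ i, U i ∈ Matrix.unitaryGroup (Fin d) ℂ)
    (p : Fin m → ℝ) (hp : ∀ i, 0 < p i) (hpsum : ∑ i, p i = 1)
    (Φ : Matrix (Fin d) (Fin d) ℂ → Matrix (Fin d) (Fin d) ℂ)
    (hΦ : ∀ ρ, Φ ρ = ∑ i, (p i : ℂ) • (U i * ρ * (U i)ᴴ))
    (lam : ℂ) (hlam : ‖lam‖ = 1)
    (X : Matrix (Fin d) (Fin d) ℂ) (hX : Φ X = lam • X)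
    (j : Fin m) :
    U j * X * (U j)ᴴ = lam • X ∧ U j * X * (U j)ᴴ = Φ X := by
  have key : U j * X * (U j)ᴴ = lam • X := by
    set v : Fin m → EuclideanSpace ℂ (Fin d × Fin d) := fun i => toE (U i * X * (U i)ᴴ) with hv
    set w : EuclideanSpace ℂ (Fin d × Fin d) := lam • toE X with hw
    have hXeq : ∑ i, (p i : ℂ) • (U i * X * (U i)ᴴ) = lam • X := by rw [← hΦ X, hX]
    have hsum : ∑ i, (p i : ℂ) • v i = w := by
      rw [hw, ← map_smul toE, ← hXeq, map_sum]
      simp [hv]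
    have hnormX : ∀ i, ‖v i‖ = ‖toE X‖ := by
      intro i
      have h1 : ‖v i‖ ^ 2 = ‖(toE X : EuclideanSpace ℂ (Fin d × Fin d))‖ ^ 2 := by
        rw [← inner_self_eq_norm_sq (𝕜 := ℂ), ← inner_self_eq_norm_sq (𝕜 := ℂ)]
        rw [hv]
        simp only [inner_toE]
        rw [trace_conj_unitary (U i) (hU i)]
      have := norm_nonneg (v i)
      have := norm_nonneg (toE X : EuclideanSpace ℂ (Fin d × Fin d))
      nlinarith
    have hnw : ‖w‖ = ‖toE X‖ := by
      rw [hw, norm_smul, hlam, one_mul]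
    set g : Fin m → ℝ := fun i => Complex.re (inner ℂ w (v i) : ℂ) with hg
    have hle : ∀ i, g i ≤ ‖w‖ ^ 2 := by
      intro i
      have h1 : g i ≤ ‖(inner ℂ w (v i) : ℂ)‖ := Complex.re_le_norm _
      have h2 : ‖(inner ℂ w (v i) : ℂ)‖ ≤ ‖w‖ * ‖v i‖ := norm_inner_le_norm _ _
      rw [hnormX i, ← hnw] at h2
      nlinarith
    have hsum2 : ∑ i, p i * g i = ‖w‖ ^ 2 := by
      have h1 : (inner ℂ w (∑ i, (p i : ℂ) • v i) : ℂ) = ∑ i, (p i : ℂ) * inner ℂ w (v i) := by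
        rw [inner_sum]
        simp only [inner_smul_right, PiLp.inner_apply, PiLp.smul_apply, smul_eq_mul,
          Finset.mul_sum]
      rw [hsum] at h1
      have h2 := congrArg Complex.re h1
      have h3 : Complex.re (inner ℂ w w : ℂ) = ‖w‖ ^ 2 := by
        simpa [RCLike.re_to_complex] using inner_self_eq_norm_sq (𝕜 := ℂ) w
      rw [h3] at h2
      rw [h2, Complex.re_sum]
      exact Finset.sum_congr rfl fun i _ => by simp [hg, Complex.mul_re, Complex.ofReal_re, Complex.ofReal_im]
    have hgj : g j = ‖w‖ ^ 2 := by
      have h0 : ∑ i, p i * (‖w‖ ^ 2 - g i) = 0 := by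
        simp only [mul_sub]
        rw [Finset.sum_sub_distrib, hsum2, ← Finset.sum_mul, hpsum, one_mul, sub_self]
      have h1 := (Finset.sum_eq_zero_iff_of_nonneg (fun i _ =>
        mul_nonneg (hp i).le (by linarith [hle i]))).1 h0 j (Finset.mem_univ j)
      have := (hp j).ne'
      have h2 : ‖w‖ ^ 2 - g j = 0 := by
        rcases mul_eq_zero.1 h1 with h | h
        · exact absurd h this
        · exact h
      linarith
    have hvw : v j = w := by
      have h1 : ‖v j - w‖ ^ 2 = 0 := by
        rw [@norm_sub_sq ℂ]
        have h2 : Complex.re (inner ℂ (v j) w : ℂ) = g j := by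
          rw [hg, ← inner_conj_symm (v j) w]
          simp only [Complex.conj_re]
        simp only [RCLike.re_to_complex]
        rw [h2, hgj, hnormX j, ← hnw]
        ring
      have := pow_eq_zero_iff (n := 2) (by norm_num) |>.1 h1
      rwa [norm_eq_zero, sub_eq_zero] at this
    have : toE (U j * X * (U j)ᴴ) = toE (lam • X) := by
      rw [_root_.map_smul]; exact hvw
    ext a b
    have := congrArg (fun v => v (a, b)) this
    exact this
  exact ⟨key, by rw [hX]; exact key⟩
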